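/- Let f : [0,1]^{n+m} → ℝⁿ be a C¹ map whose derivative has rank at most n−1 at every point (so its n-dimensional Jacobian Jⁿ_f, the product of the n largest singular values of Df, vanishes everywhere). Then ℋ^{n,m}_∞(f, [0,1]^{n+m}) = 0, where ℋ^{n,m}_∞(f,A) = inf Σ_j ℋⁿ_∞(f(Q_j))·side(Q_j)^m over countable partitions of A into cubes. -/

import Mathlib

open Set MeasureTheory
open scoped ENNReal

/-- The `n`-dimensional Hausdorff content of a set: the infimum of `∑ rⱼⁿ` over
countable covers by balls of radii `rⱼ`. -/
noncomputable def hausdorffContent (n : ℕ) {X : Type*} [PseudoMetricSpace X]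
    (A : Set X) : ℝ≥0∞ :=
  ⨅ (c : ℕ → X) (r : ℕ → ℝ) (_ : A ⊆ ⋃ j, Metric.ball (c j) (r j)),
    ∑' j, ENNReal.ofReal (r j ^ n)

/-- The half-open axis-parallel cube with lower corner `a` and sidelength `s`. -/
def halfOpenCube {d : ℕ} (a : Fin d → ℝ) (s : ℝ) : Set (Fin d → ℝ) :=
  {x | ∀ i, a i ≤ x i ∧ x i < a i + s}

/-- The `(n,m)`-Hausdorff content of `(f, A)`: the infimum of
`∑ ℋⁿ_∞(f(Qⱼ))·side(Qⱼ)ᵐ` over countable measure-theoretic partitions of `A`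
into disjoint cubes `Qⱼ`. -/
noncomputable def hausdorffContentNM (n m : ℕ) {M : Type*} [PseudoMetricSpace M]
    (f : (Fin (n + m) → ℝ) → M) (A : Set (Fin (n + m) → ℝ)) : ℝ≥0∞ :=
  ⨅ (a : ℕ → Fin (n + m) → ℝ) (s : ℕ → ℝ)
    (_ : ∀ j, 0 ≤ s j)
    (_ : ∀ j, halfOpenCube (a j) (s j) ⊆ A)
    (_ : Pairwise (Function.onFun Disjoint fun j => halfOpenCube (a j) (s j)))
    (_ : volume (A \ ⋃ j, halfOpenCube (a j) (s j)) = 0),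
    ∑' j, hausdorffContent n (f '' halfOpenCube (a j) (s j)) * ENNReal.ofReal (s j ^ m)

section helpers

lemma halfOpenCube_empty {d : ℕ} (hd : 0 < d) (a : Fin d → ℝ) : halfOpenCube a 0 = ∅ := by
  ext x
  simp only [halfOpenCube, mem_setOf_eq, mem_empty_iff_false, iff_false, not_forall]
  refine ⟨⟨0, hd⟩, fun hx => ?_⟩
  rw [add_zero] at hx
  linarith [hx.1, hx.2]

lemma halfOpenCube_eq_pi {d : ℕ} (a : Fin d → ℝ) (s : ℝ) :
    halfOpenCube a s = Set.pi univ (fun i => Ico (a i) (a i + s)) := by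
  ext x; simp [halfOpenCube, Set.mem_pi, mem_Ico]

end helpers


lemma euclid_coord_abs_le {k : ℕ} (x : EuclideanSpace ℝ (Fin k)) (i : Fin k) : |x i| ≤ ‖x‖ := by
  rw [EuclideanSpace.norm_eq]
  have h1 : |x i| = Real.sqrt (‖x i‖ ^ 2) := by
    rw [Real.sqrt_sq_eq_abs, Real.norm_eq_abs, abs_abs]
  rw [h1]
  exact Real.sqrt_le_sqrt <|
    Finset.single_le_sum (f := fun j => ‖x j‖ ^ 2) (fun j _ => sq_nonneg _) (Finset.mem_univ i)

lemma pi_norm_le_euclid {k : ℕ} (x : EuclideanSpace ℝ (Fin k)) :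
    ‖(fun i => x i : Fin k → ℝ)‖ ≤ ‖x‖ := by
  refine (pi_norm_le_iff_of_nonneg (norm_nonneg x)).2 fun i => ?_
  rw [Real.norm_eq_abs]; exact euclid_coord_abs_le x i

lemma euclid_norm_le {k : ℕ} (x : EuclideanSpace ℝ (Fin k)) :
    ‖x‖ ≤ Real.sqrt k * ‖(fun i => x i : Fin k → ℝ)‖ := by
  rw [EuclideanSpace.norm_eq]
  have h : ∑ i, ‖x i‖ ^ 2 ≤ (k : ℝ) * ‖(fun i => x i : Fin k → ℝ)‖ ^ 2 := by
    calc ∑ i, ‖x i‖ ^ 2 ≤ ∑ _i : Fin k, ‖(fun i => x i : Fin k → ℝ)‖ ^ 2 := by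
          refine Finset.sum_le_sum fun i _ => ?_
          exact pow_le_pow_left₀ (norm_nonneg _) (norm_le_pi_norm (fun j => x j : Fin k → ℝ) i) 2
      _ = (k : ℝ) * _ := by simp [Finset.sum_const, mul_comm]
  calc Real.sqrt (∑ i, ‖x i‖ ^ 2) ≤ Real.sqrt ((k : ℝ) * ‖(fun i => x i : Fin k → ℝ)‖ ^ 2) :=
        Real.sqrt_le_sqrt h
    _ = Real.sqrt k * ‖(fun i => x i : Fin k → ℝ)‖ := by
        rw [Real.sqrt_mul (by positivity), Real.sqrt_sq (norm_nonneg _)]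

lemma hausdorffContent_le_of_cover {n : ℕ} (hn : 0 < n) {X : Type*} [PseudoMetricSpace X]
    [Nonempty X] {S : Set X} {ι : Type*} [Fintype ι] (c : ι → X) (r : ℝ)
    (hcov : S ⊆ ⋃ i, Metric.ball (c i) r) :
    hausdorffContent n S ≤ (Fintype.card ι : ℝ≥0∞) * ENNReal.ofReal (r ^ n) := by
  classical
  inhabit X
  set K := Fintype.card ι with hK
  set e := Fintype.equivFin ι with he
  set c' : ℕ → X := fun j => if h : j < K then c (e.symm ⟨j, h⟩) else default with hc'
  set r' : ℕ → ℝ := fun j => if j < K then r else 0 with hr'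
  have hcov' : S ⊆ ⋃ j, Metric.ball (c' j) (r' j) := by
    intro x hx
    obtain ⟨i, hi⟩ := mem_iUnion.1 (hcov hx)
    refine mem_iUnion.2 ⟨(e i : ℕ), ?_⟩
    have hlt : (e i : ℕ) < K := (e i).isLt
    simpa [hc', hr', hlt] using hi
  refine le_trans (iInf_le_of_le c' (iInf_le_of_le r' (iInf_le _ hcov'))) ?_
  have hzero : ∀ j ∉ Finset.range K, ENNReal.ofReal (r' j ^ n) = 0 := by
    intro j hj
    have : ¬ j < K := by simpa using hj
    simp [hr', this, zero_pow hn.ne']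
  rw [tsum_eq_sum hzero]
  have heq : ∀ j ∈ Finset.range K, ENNReal.ofReal (r' j ^ n) = ENNReal.ofReal (r ^ n) := by
    intro j hj; simp [hr', Finset.mem_range.1 hj]
  rw [Finset.sum_congr rfl heq, Finset.sum_const, Finset.card_range, nsmul_eq_mul]

set_option maxHeartbeats 1000000 in
lemma content_le_of_near_subspace {n : ℕ} (hn : 0 < n)
    (V : Submodule ℝ (EuclideanSpace ℝ (Fin n))) (hV : Module.finrank ℝ V ≤ n - 1)
    (S : Set (Fin n → ℝ)) (y0 : Fin n → ℝ) (R ρ : ℝ) (hρ : 0 < ρ)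
    (hS : ∀ y ∈ S, ∃ v : V, ‖v‖ ≤ R ∧
      ‖y - y0 - (fun i => ((v : EuclideanSpace ℝ (Fin n)) i))‖ ≤ ρ) :
    hausdorffContent n S ≤
      (((2 * (⌈(n : ℝ) * R / ρ⌉₊ + 1) + 1) ^ (n - 1) : ℕ) : ℝ≥0∞) *
        ENNReal.ofReal ((3 * ρ) ^ n) := by
  classical
  set k := Module.finrank ℝ V with hk
  set b := stdOrthonormalBasis ℝ V with hb
  set M : ℕ := ⌈(n : ℝ) * R / ρ⌉₊ + 1 with hM
  set t : ℝ := ρ / n with ht'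
  have hnpos : (0 : ℝ) < n := Nat.cast_pos.2 hn
  have ht : 0 < t := div_pos hρ hnpos
  set ctr : (Fin k → Fin (2 * M + 1)) → (Fin n → ℝ) := fun z => fun i =>
    y0 i + ((b.repr.symm (WithLp.toLp 2 (fun j => t * (((z j : ℕ) : ℤ) - (M : ℤ)))) : V) :
      EuclideanSpace ℝ (Fin n)) i with hctr
  have hcov : S ⊆ ⋃ z, Metric.ball (ctr z) (3 * ρ) := by
    intro y hy
    obtain ⟨v, hvR, hvy⟩ := hS y hy
    have hR0 : 0 ≤ R := le_trans (norm_nonneg _) hvR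
    set c : EuclideanSpace ℝ (Fin k) := b.repr v with hc
    have hcoord : ∀ j, |c j| ≤ R := fun j =>
      le_trans (euclid_coord_abs_le c j) (by rw [hc, b.repr.norm_map]; exact hvR)
    have hround : ∀ j, |round (c j / t)| ≤ (M : ℤ) := by
      intro j
      have h2 : |c j / t| ≤ (n : ℝ) * R / ρ := by
        have he2 : |c j / t| = (n : ℝ) * |c j| / ρ := by
          rw [abs_div, abs_of_pos ht, ht']; field_simp
        rw [he2]
        gcongr
        exact hcoord j
      have h3 : (|round (c j / t)| : ℝ) ≤ (M : ℝ) := by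
        have h4 := abs_sub_round (c j / t)
        have h5 : ((n : ℝ) * R / ρ) ≤ (⌈(n : ℝ) * R / ρ⌉₊ : ℝ) := Nat.le_ceil _
        have h6 : (|round (c j / t)| : ℝ) = |(round (c j / t) : ℝ)| := by push_cast; rfl
        have h7 : |(round (c j / t) : ℝ)| ≤ |c j / t| + 1/2 := by
          calc |(round (c j / t) : ℝ)| = |((round (c j / t) : ℝ) - c j / t) + c j / t| := by
                ring_nf
            _ ≤ |(round (c j / t) : ℝ) - c j / t| + |c j / t| := abs_add_le _ _
            _ ≤ 1/2 + |c j / t| := by rw [abs_sub_comm]; linarith [h4]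
            _ = |c j / t| + 1/2 := by ring
        rw [h6]
        have h8 : (M : ℝ) = (⌈(n : ℝ) * R / ρ⌉₊ : ℝ) + 1 := by rw [hM]; push_cast; ring
        linarith
      exact_mod_cast h3
    set z : Fin k → Fin (2 * M + 1) := fun j =>
      ⟨(round (c j / t) + M).toNat, by
        have := hround j; rw [abs_le] at this; omega⟩ with hz
    have hzval : ∀ j, (((z j : ℕ) : ℤ) - (M : ℤ)) = round (c j / t) := by
      intro j
      have := hround j; rw [abs_le] at this
      simp only [hz]
      omega
    set q : EuclideanSpace ℝ (Fin k) := WithLp.toLp 2 (fun j => t * (round (c j / t) : ℝ)) with hq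
    set p : V := b.repr.symm q with hp
    have heqq : (WithLp.toLp 2 (fun j => t * (((z j : ℕ) : ℤ) - (M : ℤ))) : EuclideanSpace ℝ (Fin k)) = q := by
      congr 1
      funext j
      show t * ((((z j : ℕ) : ℤ) : ℝ) - ((M : ℤ) : ℝ)) = t * (round (c j / t) : ℝ)
      have hcast : ((((z j : ℕ) : ℤ) : ℝ) - ((M : ℤ) : ℝ)) = ((round (c j / t) : ℤ) : ℝ) := by
        rw [← Int.cast_sub]
        exact_mod_cast congrArg (fun x : ℤ => (x : ℝ)) (hzval j)
      rw [hcast]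
    have hctrz : ctr z = fun i => y0 i + ((p : EuclideanSpace ℝ (Fin n)) i) := by
      show (fun i => y0 i + ((b.repr.symm (WithLp.toLp 2 (fun j => t * (((z j : ℕ) : ℤ) - (M : ℤ)))) : V) :
          EuclideanSpace ℝ (Fin n)) i) = fun i => y0 i + ((p : EuclideanSpace ℝ (Fin n)) i)
      rw [heqq]
    have hvp : ‖v - p‖ ≤ ρ / 2 := by
      set w : EuclideanSpace ℝ (Fin k) := b.repr (v - p) with hw
      have hwj : ∀ j, |w j| ≤ t / 2 := by
        intro j
        have hwj' : w j = c j - q j := by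
          rw [hw, map_sub, hp, b.repr.apply_symm_apply]; rfl
        rw [hwj']
        show |c j - t * (round (c j / t) : ℝ)| ≤ t / 2
        have hne : c j - t * (round (c j / t) : ℝ) = t * (c j / t - round (c j / t)) := by
          field_simp
        rw [hne, abs_mul, abs_of_pos ht]
        have habs := abs_sub_round (c j / t)
        have := mul_le_mul_of_nonneg_left habs ht.le
        linarith
      have hsup : ‖(fun j => w j : Fin k → ℝ)‖ ≤ t / 2 := by
        refine (pi_norm_le_iff_of_nonneg (by positivity)).2 fun j => ?_
        rw [Real.norm_eq_abs]; exact hwj j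
      have hsqrt : Real.sqrt k ≤ (n : ℝ) := by
        have hkn : (k : ℝ) ≤ (n : ℝ) ^ 2 := by
          have h1 : k ≤ n := le_trans hV (Nat.sub_le n 1)
          have h2 : (k : ℝ) ≤ (n : ℝ) := Nat.cast_le.2 h1
          have h3 : (1 : ℝ) ≤ (n : ℝ) := by exact_mod_cast hn
          nlinarith [h2, h3]
        calc Real.sqrt k ≤ Real.sqrt ((n : ℝ) ^ 2) := Real.sqrt_le_sqrt hkn
          _ = (n : ℝ) := Real.sqrt_sq hnpos.le
      have hnm : ‖v - p‖ = ‖w‖ := (b.repr.norm_map (v - p)).symm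
      rw [hnm]
      calc ‖w‖ ≤ Real.sqrt k * ‖(fun j => w j : Fin k → ℝ)‖ := euclid_norm_le w
        _ ≤ (n : ℝ) * (t / 2) := mul_le_mul hsqrt hsup (norm_nonneg _) hnpos.le
        _ = ρ / 2 := by rw [ht']; field_simp
    refine mem_iUnion.2 ⟨z, ?_⟩
    rw [Metric.mem_ball, dist_eq_norm]
    have hsplit : y - ctr z =
        (y - y0 - fun i => ((v : EuclideanSpace ℝ (Fin n)) i)) +
          (fun i => (((v - p : V) : EuclideanSpace ℝ (Fin n)) i)) := by
      funext i
      rw [hctrz]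
      simp only [Pi.add_apply, Pi.sub_apply, Submodule.coe_sub]
      have hco : ((((v : EuclideanSpace ℝ (Fin n)) - (p : EuclideanSpace ℝ (Fin n)))) i) =
          (v : EuclideanSpace ℝ (Fin n)) i - (p : EuclideanSpace ℝ (Fin n)) i := rfl
      rw [hco]; ring
    rw [hsplit]
    have h2 : ‖(fun i => (((v - p : V) : EuclideanSpace ℝ (Fin n)) i) : Fin n → ℝ)‖ ≤ ρ / 2 := by
      refine le_trans (pi_norm_le_euclid _) ?_
      rw [Submodule.norm_coe]
      exact hvp
    calc ‖(y - y0 - fun i => ((v : EuclideanSpace ℝ (Fin n)) i)) +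
          (fun i => (((v - p : V) : EuclideanSpace ℝ (Fin n)) i))‖
        ≤ ‖y - y0 - fun i => ((v : EuclideanSpace ℝ (Fin n)) i)‖ +
          ‖(fun i => (((v - p : V) : EuclideanSpace ℝ (Fin n)) i) : Fin n → ℝ)‖ := norm_add_le _ _
      _ ≤ ρ + ρ / 2 := add_le_add hvy h2
      _ < 3 * ρ := by linarith
  calc hausdorffContent n S
      ≤ (Fintype.card (Fin k → Fin (2 * M + 1)) : ℝ≥0∞) * ENNReal.ofReal ((3 * ρ) ^ n) :=
        hausdorffContent_le_of_cover hn ctr (3 * ρ) hcov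
    _ ≤ (((2 * M + 1) ^ (n - 1) : ℕ) : ℝ≥0∞) * ENNReal.ofReal ((3 * ρ) ^ n) := by
        refine mul_le_mul_left ?_ _
        have hcard : Fintype.card (Fin k → Fin (2 * M + 1)) = (2 * M + 1) ^ k := by
          simp [Fintype.card_fun]
        rw [hcard]
        exact_mod_cast Nat.pow_le_pow_right (by omega) hV

lemma hausdorffContent_empty' {n : ℕ} (hn : 0 < n) {X : Type*} [PseudoMetricSpace X]
    [Nonempty X] : hausdorffContent n (∅ : Set X) = 0 := by
  refine le_antisymm ?_ (zero_le)
  have h := hausdorffContent_le_of_cover (S := (∅ : Set X)) hn (Fin.elim0 : Fin 0 → X) 0 (empty_subset _)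
  simpa using h


set_option maxHeartbeats 2000000 in
/-- A `C¹` map `f : ℝ^{n+m} → ℝⁿ` whose derivative has rank at most `n − 1`
everywhere (so its `n`-dimensional Jacobian vanishes identically) has zero
`(n,m)`-Hausdorff content on the unit cube. -/
theorem hausdorffContentNM_eq_zero_of_rank_lt
    {n m : ℕ} (f : (Fin (n + m) → ℝ) → (Fin n → ℝ)) (hf : ContDiff ℝ 1 f)
    (hrank : ∀ x, LinearMap.rank (fderiv ℝ f x).toLinearMap < (n : Cardinal)) :
    hausdorffContentNM n m f (Icc (0 : Fin (n + m) → ℝ) 1) = 0 := by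
  classical
  rcases Nat.eq_zero_or_pos n with hn0 | hn
  · subst hn0
    exact absurd (hrank 0) (by simp)
  have hd0 : 0 < n + m := by omega
  have hfd : Differentiable ℝ f := hf.differentiable one_ne_zero
  have hK : IsCompact (Icc (0 : Fin (n + m) → ℝ) 1) := isCompact_Icc
  have hfc : Continuous (fderiv ℝ f) := hf.continuous_fderiv one_ne_zero
  obtain ⟨L0, hL0⟩ := hK.exists_bound_of_continuousOn hfc.continuousOn
  set L := max L0 0 with hL
  have hLnn : 0 ≤ L := le_max_right _ _
  have hLb : ∀ x ∈ Icc (0 : Fin (n + m) → ℝ) 1, ‖fderiv ℝ f x‖ ≤ L :=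
    fun x hx => (hL0 x hx).trans (le_max_left _ _)
  have hUC := hK.uniformContinuousOn_of_continuous hfc.continuousOn
  rw [Metric.uniformContinuousOn_iff] at hUC
  have hsqn : (0 : ℝ) ≤ Real.sqrt n := Real.sqrt_nonneg _
  set B : ℝ := 2 * ((n : ℝ) * (Real.sqrt n * L)) + 5 with hB
  have hB5 : 5 ≤ B := by
    have : 0 ≤ (n : ℝ) * (Real.sqrt n * L) := by positivity
    linarith
  set C : ℝ := B ^ (n - 1) * 3 ^ n with hC
  have hC0 : 0 < C := by positivity
  -- the key quantitative estimate
  have key : ∀ ε : ℝ, 0 < ε → ε ≤ 1 →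
      hausdorffContentNM n m f (Icc (0 : Fin (n + m) → ℝ) 1) ≤ ENNReal.ofReal (C * ε) := by
    intro ε hε0 hε1
    obtain ⟨δ, hδ0, hδ⟩ := hUC ε hε0
    set N : ℕ := ⌈1 / δ⌉₊ + 1 with hN
    have hNpos : 0 < N := Nat.succ_pos _
    have hNR : (0 : ℝ) < N := Nat.cast_pos.2 hNpos
    set s : ℝ := (N : ℝ)⁻¹ with hs
    have hs0 : 0 < s := by positivity
    have hNs : (N : ℝ) * s = 1 := by rw [hs]; field_simp
    have hsδ : s < δ := by
      have h1 : 1 / δ < (N : ℝ) := by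
        calc 1 / δ ≤ (⌈1 / δ⌉₊ : ℝ) := Nat.le_ceil _
          _ < (N : ℝ) := by rw [hN]; exact_mod_cast Nat.lt_succ_self _
      rw [div_lt_iff₀ hδ0] at h1
      nlinarith [hNR, hNs, h1]
    -- corners of the grid
    set aG : (Fin (n + m) → Fin N) → (Fin (n + m) → ℝ) := fun g i => (g i : ℝ) * s with haG
    have haGmem : ∀ g, aG g ∈ Icc (0 : Fin (n + m) → ℝ) 1 := by
      intro g
      simp only [mem_Icc, Pi.le_def, Pi.zero_apply, Pi.one_apply]
      constructor
      · intro i; exact mul_nonneg (Nat.cast_nonneg _) hs0.le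
      · intro i
        have hgi : ((g i : ℕ) : ℝ) ≤ (N : ℝ) := by exact_mod_cast (g i).isLt.le
        calc (g i : ℝ) * s ≤ (N : ℝ) * s := mul_le_mul_of_nonneg_right hgi hs0.le
          _ = 1 := hNs
    have hQsub : ∀ g, halfOpenCube (aG g) s ⊆ Icc (0 : Fin (n + m) → ℝ) 1 := by
      intro g x hx
      simp only [mem_Icc, Pi.le_def, Pi.zero_apply, Pi.one_apply]
      constructor
      · intro i; exact le_trans (mul_nonneg (Nat.cast_nonneg _) hs0.le) (hx i).1
      · intro i
        have h2 := (hx i).2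
        have hgi : ((g i : ℕ) : ℝ) + 1 ≤ (N : ℝ) := by exact_mod_cast (g i).isLt
        refine le_of_lt ?_
        calc x i < aG g i + s := h2
          _ = (((g i : ℕ) : ℝ) + 1) * s := by simp only [haG]; ring
          _ ≤ (N : ℝ) * s := mul_le_mul_of_nonneg_right hgi hs0.le
          _ = 1 := hNs
    have hydist : ∀ g, ∀ x ∈ halfOpenCube (aG g) s, dist x (aG g) ≤ s := by
      intro g x hx
      rw [dist_pi_le_iff hs0.le]
      intro i
      rw [Real.dist_eq, abs_le]
      have h1 := (hx i).1
      have h2 := (hx i).2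
      constructor <;> linarith
    have hMVT : ∀ g, ∀ y ∈ halfOpenCube (aG g) s,
        ‖f y - f (aG g) - fderiv ℝ f (aG g) (y - aG g)‖ ≤ ε * s := by
      intro g y hy
      have haQ : aG g ∈ halfOpenCube (aG g) s := fun i => ⟨le_refl _, by linarith [hs0]⟩
      have hconv : Convex ℝ (halfOpenCube (aG g) s) := by
        rw [halfOpenCube_eq_pi]
        exact convex_pi fun i _ => convex_Ico _ _
      have hder : ∀ x ∈ halfOpenCube (aG g) s,
          HasFDerivWithinAt (fun z => f z - fderiv ℝ f (aG g) z)
            (fderiv ℝ f x - fderiv ℝ f (aG g)) (halfOpenCube (aG g) s) x :=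
        fun x _ =>
          (((hfd x).hasFDerivAt).sub ((fderiv ℝ f (aG g)).hasFDerivAt)).hasFDerivWithinAt
      have hbound : ∀ x ∈ halfOpenCube (aG g) s, ‖fderiv ℝ f x - fderiv ℝ f (aG g)‖ ≤ ε := by
        intro x hx
        have hdx : dist x (aG g) < δ := lt_of_le_of_lt (hydist g x hx) hsδ
        have hcl := hδ x (hQsub g hx) (aG g) (haGmem g) hdx
        rw [dist_eq_norm] at hcl
        exact hcl.le
      have hest := hconv.norm_image_sub_le_of_norm_hasFDerivWithin_le hder hbound haQ hy
      have hre : f y - fderiv ℝ f (aG g) y - (f (aG g) - fderiv ℝ f (aG g) (aG g)) =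
          f y - f (aG g) - fderiv ℝ f (aG g) (y - aG g) := by
        rw [map_sub]; abel
      rw [hre] at hest
      have hyn : ‖y - aG g‖ ≤ s := by rw [← dist_eq_norm]; exact hydist g y hy
      calc ‖f y - f (aG g) - fderiv ℝ f (aG g) (y - aG g)‖ ≤ ε * ‖y - aG g‖ := hest
        _ ≤ ε * s := mul_le_mul_of_nonneg_left hyn hε0.le
    set cN : ℕ :=
      (2 * (⌈(n : ℝ) * (Real.sqrt n * (L * s)) / (ε * s)⌉₊ + 1) + 1) ^ (n - 1) with hcN
    have percube : ∀ g : Fin (n + m) → Fin N,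
        hausdorffContent n (f '' halfOpenCube (aG g) s) ≤
          (cN : ℝ≥0∞) * ENNReal.ofReal ((3 * (ε * s)) ^ n) := by
      intro g
      set T := fderiv ℝ f (aG g) with hT
      set e2 : (Fin n → ℝ) →ₗ[ℝ] EuclideanSpace ℝ (Fin n) :=
        (WithLp.linearEquiv 2 ℝ (Fin n → ℝ)).symm.toLinearMap with he2
      set V : Submodule ℝ (EuclideanSpace ℝ (Fin n)) :=
        Submodule.map e2 (LinearMap.range T.toLinearMap) with hVdef
      have hVr : Module.finrank ℝ V ≤ n - 1 := by
        have h1 := hrank (aG g)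
        rw [LinearMap.rank, ← Module.finrank_eq_rank ℝ] at h1
        have h2 : Module.finrank ℝ (LinearMap.range T.toLinearMap) < n := by exact_mod_cast h1
        have h3 : Module.finrank ℝ V = Module.finrank ℝ (LinearMap.range T.toLinearMap) :=
          LinearEquiv.finrank_map_eq (WithLp.linearEquiv 2 ℝ (Fin n → ℝ)).symm _
        omega
      have hS : ∀ y' ∈ f '' halfOpenCube (aG g) s, ∃ v : V,
          ‖v‖ ≤ Real.sqrt n * (L * s) ∧
          ‖y' - f (aG g) - (fun i => ((v : EuclideanSpace ℝ (Fin n)) i))‖ ≤ ε * s := by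
        rintro y' ⟨y, hyQ, rfl⟩
        refine ⟨⟨e2 (T.toLinearMap (y - aG g)),
          Submodule.mem_map_of_mem (LinearMap.mem_range_self _ _)⟩, ?_, ?_⟩
        · have hyn : ‖y - aG g‖ ≤ s := by rw [← dist_eq_norm]; exact hydist g y hyQ
          have hTb : ‖T (y - aG g)‖ ≤ L * s :=
            calc ‖T (y - aG g)‖ ≤ ‖T‖ * ‖y - aG g‖ := T.le_opNorm _
              _ ≤ L * s := mul_le_mul (hLb _ (haGmem g)) hyn (norm_nonneg _) hLnn
          have hfuneq : (fun i => (e2 (T.toLinearMap (y - aG g))) i : Fin n → ℝ) =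
              T (y - aG g) := rfl
          calc ‖(⟨e2 (T.toLinearMap (y - aG g)), _⟩ : V)‖
              = ‖e2 (T.toLinearMap (y - aG g))‖ := rfl
            _ ≤ Real.sqrt n * ‖(fun i => (e2 (T.toLinearMap (y - aG g))) i : Fin n → ℝ)‖ :=
                euclid_norm_le _
            _ = Real.sqrt n * ‖T (y - aG g)‖ := by rw [hfuneq]
            _ ≤ Real.sqrt n * (L * s) := mul_le_mul_of_nonneg_left hTb hsqn
        · have hfuneq2 : (fun i =>
              (((⟨e2 (T.toLinearMap (y - aG g)),
                Submodule.mem_map_of_mem (LinearMap.mem_range_self _ _)⟩ : V) :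
                  EuclideanSpace ℝ (Fin n)) i) : Fin n → ℝ) = T (y - aG g) := rfl
          rw [hfuneq2]
          exact hMVT g y hyQ
      refine le_trans (content_le_of_near_subspace hn V hVr (f '' halfOpenCube (aG g) s)
        (f (aG g)) (Real.sqrt n * (L * s)) (ε * s) (by positivity) hS) ?_
      rw [hcN]
    -- the partition
    set cc := Fintype.card (Fin (n + m) → Fin N) with hcc
    set eq1 := Fintype.equivFin (Fin (n + m) → Fin N) with heq1
    set afun : ℕ → (Fin (n + m) → ℝ) :=
      fun j => if h : j < cc then aG (eq1.symm ⟨j, h⟩) else 0 with hafun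
    set sfun : ℕ → ℝ := fun j => if j < cc then s else 0 with hsfun
    have hcube : ∀ j (h : j < cc),
        halfOpenCube (afun j) (sfun j) = halfOpenCube (aG (eq1.symm ⟨j, h⟩)) s := by
      intro j h
      have h1 : afun j = aG (eq1.symm ⟨j, h⟩) := by rw [hafun]; simp [h]
      have h2 : sfun j = s := by rw [hsfun]; simp [h]
      rw [h1, h2]
    have hcube0 : ∀ j, ¬ j < cc → halfOpenCube (afun j) (sfun j) = ∅ := by
      intro j h
      have h2 : sfun j = 0 := by rw [hsfun]; simp [h]
      rw [h2]
      exact halfOpenCube_empty hd0 _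
    have hsfval : ∀ j, sfun j = if j < cc then s else 0 := fun _ => rfl
    have hpos : ∀ j, 0 ≤ sfun j := by
      intro j; rw [hsfval]
      split
      · exact hs0.le
      · exact le_refl 0
    have hsub : ∀ j, halfOpenCube (afun j) (sfun j) ⊆ Icc (0 : Fin (n + m) → ℝ) 1 := by
      intro j
      by_cases h : j < cc
      · rw [hcube j h]; exact hQsub _
      · rw [hcube0 j h]; exact empty_subset _
    have hdisjcore : ∀ (g g' : Fin (n + m) → Fin N) (i : Fin (n + m)) (x : Fin (n + m) → ℝ),
        ((g i : ℕ) < (g' i : ℕ)) →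
        x ∈ halfOpenCube (aG g) s → x ∈ halfOpenCube (aG g') s → False := by
      intro g g' i x hlt hx hx'
      have h1 := (hx i).2
      have h2 := (hx' i).1
      simp only [haG] at h1 h2
      have h3 : ((g i : ℕ) : ℝ) + 1 ≤ ((g' i : ℕ) : ℝ) := by exact_mod_cast hlt
      have h4 : (((g i : ℕ) : ℝ) + 1) * s ≤ ((g' i : ℕ) : ℝ) * s :=
        mul_le_mul_of_nonneg_right h3 hs0.le
      nlinarith
    have hdisj : Pairwise (Function.onFun Disjoint fun j => halfOpenCube (afun j) (sfun j)) := by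
      intro j j' hne
      show Disjoint (halfOpenCube (afun j) (sfun j)) (halfOpenCube (afun j') (sfun j'))
      by_cases h : j < cc
      · by_cases h' : j' < cc
        · rw [hcube j h, hcube j' h', Set.disjoint_left]
          intro x hx hx'
          have hgne : eq1.symm ⟨j, h⟩ ≠ eq1.symm ⟨j', h'⟩ := by
            intro hEq
            apply hne
            have h5 := congrArg eq1 hEq
            rw [Equiv.apply_symm_apply, Equiv.apply_symm_apply] at h5
            exact congrArg Fin.val h5
          obtain ⟨i, hi⟩ : ∃ i, (eq1.symm ⟨j, h⟩) i ≠ (eq1.symm ⟨j', h'⟩) i := by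
            by_contra hcon
            push_neg at hcon
            exact hgne (funext hcon)
          have hvne : ((eq1.symm ⟨j, h⟩) i : ℕ) ≠ ((eq1.symm ⟨j', h'⟩) i : ℕ) :=
            fun hv => hi (Fin.val_injective hv)
          rcases Nat.lt_or_ge ((eq1.symm ⟨j, h⟩) i : ℕ) ((eq1.symm ⟨j', h'⟩) i : ℕ) with hlt | hge
          · exact hdisjcore _ _ i x hlt hx hx'
          · have hlt' : ((eq1.symm ⟨j', h'⟩) i : ℕ) < ((eq1.symm ⟨j, h⟩) i : ℕ) := by omega
            exact hdisjcore _ _ i x hlt' hx' hx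
        · rw [hcube0 j' h']
          exact Set.disjoint_empty _
      · rw [hcube0 j h]
        exact Set.empty_disjoint _
    have hcoverIco : ∀ x ∈ Icc (0 : Fin (n + m) → ℝ) 1, (∀ i, x i ≠ 1) →
        x ∈ ⋃ j, halfOpenCube (afun j) (sfun j) := by
      intro x hx hx1
      simp only [mem_Icc, Pi.le_def, Pi.zero_apply, Pi.one_apply] at hx
      have hx0 : ∀ i, 0 ≤ x i := hx.1
      have hlt1 : ∀ i, x i < 1 := fun i => lt_of_le_of_ne (hx.2 i) (hx1 i)
      have hfl : ∀ i : Fin (n + m), ⌊x i * N⌋₊ < N := by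
        intro i
        rw [Nat.floor_lt (mul_nonneg (hx0 i) (Nat.cast_nonneg N))]
        nlinarith [hlt1 i, hNR, hx0 i]
      set g : Fin (n + m) → Fin N := fun i => ⟨⌊x i * N⌋₊, hfl i⟩ with hg
      have hmem : x ∈ halfOpenCube (aG g) s := by
        intro i
        constructor
        · show ((⌊x i * N⌋₊ : ℕ) : ℝ) * s ≤ x i
          have hfle : ((⌊x i * N⌋₊ : ℕ) : ℝ) ≤ x i * N := Nat.floor_le (mul_nonneg (hx0 i) (Nat.cast_nonneg N))
          nlinarith [hs0, hNs]
        · show x i < ((⌊x i * N⌋₊ : ℕ) : ℝ) * s + s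
          have hflt : x i * N < ((⌊x i * N⌋₊ : ℕ) : ℝ) + 1 := Nat.lt_floor_add_one _
          nlinarith [hs0, hNs]
      refine mem_iUnion.2 ⟨(eq1 g : ℕ), ?_⟩
      rw [hcube _ (eq1 g).isLt]
      have : (⟨((eq1 g : ℕ)), (eq1 g).isLt⟩ : Fin cc) = eq1 g := rfl
      rw [this, Equiv.symm_apply_apply]
      exact hmem
    have hvol : volume ((Icc (0 : Fin (n + m) → ℝ) 1) \
        ⋃ j, halfOpenCube (afun j) (sfun j)) = 0 := by
      have hsub2 : (Icc (0 : Fin (n + m) → ℝ) 1) \ (⋃ j, halfOpenCube (afun j) (sfun j)) ⊆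
          ⋃ i, {x : Fin (n + m) → ℝ | x i = 1} := by
        rintro x ⟨hx1, hx2⟩
        by_contra hcon
        simp only [mem_iUnion, mem_setOf_eq, not_exists] at hcon
        exact hx2 (hcoverIco x hx1 hcon)
      refine measure_mono_null hsub2 (measure_iUnion_null fun i => ?_)
      have hset : {x : Fin (n + m) → ℝ | x i = 1} =
          Set.pi univ (fun j => if j = i then {1} else univ) := by
        ext x
        simp only [mem_setOf_eq, Set.mem_pi, mem_univ, forall_true_left]
        constructor
        · intro hxi j
          by_cases hji : j = i
          · subst hji; simp [hxi]
          · simp [hji]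
        · intro hall
          have := hall i
          simpa using this
      rw [hset, volume_pi_pi]
      refine Finset.prod_eq_zero (Finset.mem_univ i) ?_
      simp
    refine le_trans (iInf_le_of_le afun <| iInf_le_of_le sfun <| iInf_le_of_le hpos <|
      iInf_le_of_le hsub <| iInf_le_of_le hdisj <| iInf_le _ hvol) ?_
    have hterm0 : ∀ j ∉ Finset.range cc,
        hausdorffContent n (f '' halfOpenCube (afun j) (sfun j)) *
          ENNReal.ofReal (sfun j ^ m) = 0 := by
      intro j hj
      have h : ¬ j < cc := by simpa using hj
      rw [hcube0 j h, image_empty, hausdorffContent_empty' hn, zero_mul]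
    rw [tsum_eq_sum hterm0]
    set X : ℝ≥0∞ := (cN : ℝ≥0∞) * ENNReal.ofReal ((3 * (ε * s)) ^ n) *
      ENNReal.ofReal (s ^ m) with hX
    have hbnd : ∀ j ∈ Finset.range cc,
        hausdorffContent n (f '' halfOpenCube (afun j) (sfun j)) *
          ENNReal.ofReal (sfun j ^ m) ≤ X := by
      intro j hj
      have h : j < cc := Finset.mem_range.1 hj
      have hsj : sfun j = s := by rw [hsfun]; simp [h]
      rw [hcube j h, hsj, hX]
      exact mul_le_mul_left (percube _) _
    refine le_trans (Finset.sum_le_sum hbnd) ?_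
    rw [Finset.sum_const, Finset.card_range, nsmul_eq_mul]
    -- final arithmetic
    have hXr : (cc : ℝ≥0∞) * X =
        ENNReal.ofReal ((cc : ℝ) * ((cN : ℝ) * ((3 * (ε * s)) ^ n * s ^ m))) := by
      rw [hX]
      rw [ENNReal.ofReal_mul (by positivity), ENNReal.ofReal_mul (by positivity),
        ENNReal.ofReal_mul (by positivity)]
      rw [ENNReal.ofReal_natCast, ENNReal.ofReal_natCast]
      ring
    rw [hXr]
    refine ENNReal.ofReal_le_ofReal ?_
    have hccR : (cc : ℝ) = (N : ℝ) ^ (n + m) := by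
      rw [hcc, Fintype.card_fun, Fintype.card_fin, Fintype.card_fin, Nat.cast_pow]
    have hsd : (N : ℝ) ^ (n + m) * (s ^ n * s ^ m) = 1 := by
      rw [← pow_add, ← mul_pow, hNs, one_pow]
    have hpow3 : (3 * (ε * s)) ^ n = 3 ^ n * ε ^ n * s ^ n := by
      rw [mul_pow, mul_pow]; ring
    have hLHS : (cc : ℝ) * ((cN : ℝ) * ((3 * (ε * s)) ^ n * s ^ m)) =
        (cN : ℝ) * (3 ^ n * ε ^ n) := by
      rw [hccR, hpow3]
      calc (N : ℝ) ^ (n + m) * ((cN : ℝ) * (3 ^ n * ε ^ n * s ^ n * s ^ m))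
          = (cN : ℝ) * (3 ^ n * ε ^ n) * ((N : ℝ) ^ (n + m) * (s ^ n * s ^ m)) := by ring
        _ = (cN : ℝ) * (3 ^ n * ε ^ n) := by rw [hsd, mul_one]
    rw [hLHS]
    have harg : (n : ℝ) * (Real.sqrt n * (L * s)) / (ε * s) = (n : ℝ) * (Real.sqrt n * L) / ε := by
      field_simp
    have harg0 : 0 ≤ (n : ℝ) * (Real.sqrt n * L) / ε := by positivity
    have hceil : (⌈(n : ℝ) * (Real.sqrt n * (L * s)) / (ε * s)⌉₊ : ℝ) <
        (n : ℝ) * (Real.sqrt n * L) / ε + 1 := by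
      rw [harg]; exact Nat.ceil_lt_add_one harg0
    have hbase : (2 * ((⌈(n : ℝ) * (Real.sqrt n * (L * s)) / (ε * s)⌉₊ : ℝ) + 1) + 1 : ℝ) ≤
        B / ε := by
      have h5 : 5 ≤ 5 / ε := by
        rw [le_div_iff₀ hε0]; nlinarith
      have hBdiv : B / ε = 2 * ((n : ℝ) * (Real.sqrt n * L) / ε) + 5 / ε := by
        rw [hB]; ring
      rw [hBdiv]
      nlinarith [hceil]
    have hcNle : (cN : ℝ) ≤ (B / ε) ^ (n - 1) := by
      rw [hcN]
      push_cast
      refine pow_le_pow_left₀ (by positivity) ?_ _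
      exact_mod_cast hbase
    have hfin : (B / ε) ^ (n - 1) * (3 ^ n * ε ^ n) = C * ε := by
      rw [hC, div_pow]
      have hεn : ε ^ n = ε ^ (n - 1) * ε := by
        conv_lhs => rw [show n = (n - 1) + 1 by omega]
        rw [pow_succ]
      rw [hεn]
      field_simp
    calc (cN : ℝ) * (3 ^ n * ε ^ n) ≤ (B / ε) ^ (n - 1) * (3 ^ n * ε ^ n) :=
          mul_le_mul_of_nonneg_right hcNle (by positivity)
      _ = C * ε := hfin

  -- conclude
  refine le_antisymm ?_ (zero_le)
  refine ENNReal.le_of_forall_pos_le_add fun ε' hε' _ => ?_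
  rw [zero_add]
  have hε'R : (0 : ℝ) < (ε' : ℝ) := hε'
  set ε : ℝ := min 1 ((ε' : ℝ) / (2 * C)) with hε
  have hε0 : 0 < ε := lt_min one_pos (by positivity)
  have hε1 : ε ≤ 1 := min_le_left _ _
  refine (key ε hε0 hε1).trans ?_
  rw [← ENNReal.ofReal_coe_nnreal]
  refine ENNReal.ofReal_le_ofReal ?_
  have h1 : C * ε ≤ C * ((ε' : ℝ) / (2 * C)) :=
    mul_le_mul_of_nonneg_left (min_le_right _ _) hC0.le
  have h2 : C * ((ε' : ℝ) / (2 * C)) = (ε' : ℝ) / 2 := by field_simp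
  linarith
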